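/- Let X and Y be locally compact, connected Hausdorff spaces, ρ a quasi-integral on C_c(X), η a quasi-integral on C_c(Y), and suppose η × ρ is a quasi-integral on C_c(X × Y). Then η × ρ is simple if and only if there exist simple quasi-integrals ρ' on C_c(X) and η' on C_c(Y) such that η × ρ = η' × ρ' as functionals on C_c(X × Y). -/

import Mathlib

open scoped ENNReal CompactlySupported
open CompactlySupportedContinuousMap

namespace QLF

variable {X Y : Type*}

/-- Membership in the singly generated subalgebra `B(f)`:
`g ∈ B(f)` iff `g = φ ∘ f` for some continuous `φ` with `φ 0 = 0`. -/
def InB [TopologicalSpace X] (f g : C_c(X, ℝ)) : Prop :=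
  ∃ φ : C(ℝ, ℝ), φ 0 = 0 ∧ ∀ x, g x = φ (f x)

/-- A quasi-integral (quasi-linear functional) on `C_c(X)`. -/
structure IsQuasiIntegral [TopologicalSpace X] (ρ : C_c(X, ℝ) → ℝ) : Prop where
  smul : ∀ (a : ℝ) (f : C_c(X, ℝ)), ρ (a • f) = a * ρ f
  add : ∀ f g h : C_c(X, ℝ), InB f g → InB f h → ρ (g + h) = ρ g + ρ h
  pos : ∀ f : C_c(X, ℝ), (∀ x, 0 ≤ f x) → 0 ≤ ρ f

/-- The value of the topological measure corresponding to `ρ` on an open set. -/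
noncomputable def qiOpen [TopologicalSpace X] (ρ : C_c(X, ℝ) → ℝ) (U : Set X) : ℝ≥0∞ :=
  ⨆ (f : C_c(X, ℝ)) (_ : (∀ x, 0 ≤ f x ∧ f x ≤ 1) ∧ tsupport f ⊆ U), ENNReal.ofReal (ρ f)

open Classical in
/-- The topological measure corresponding to a quasi-integral `ρ`:
on open sets given by `qiOpen`, on other (closed) sets by outer regularity. -/
noncomputable def qiMeas [TopologicalSpace X] (ρ : C_c(X, ℝ) → ℝ) (A : Set X) : ℝ≥0∞ :=
  if IsOpen A then qiOpen ρ A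
  else ⨅ (U : Set X) (_ : IsOpen U ∧ A ⊆ U), qiOpen ρ U

/-- A topological measure on `X` (as a set function on all sets; only its values on
open and closed sets are constrained/meaningful). -/
def IsTopMeasure [TopologicalSpace X] (μ : Set X → ℝ≥0∞) : Prop :=
  (∀ A B : Set X, Disjoint A B → (IsCompact A ∨ IsOpen A) → (IsCompact B ∨ IsOpen B) →
      (IsCompact (A ∪ B) ∨ IsOpen (A ∪ B)) → μ (A ∪ B) = μ A + μ B) ∧
  (∀ U : Set X, IsOpen U → μ U = ⨆ (K : Set X) (_ : IsCompact K ∧ K ⊆ U), μ K) ∧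
  (∀ F : Set X, IsClosed F → μ F = ⨅ (U : Set X) (_ : IsOpen U ∧ F ⊆ U), μ U)

/-- A simple topological measure: assumes only the values 0 and 1 on open and closed sets. -/
def IsSimpleTM [TopologicalSpace X] (μ : Set X → ℝ≥0∞) : Prop :=
  IsTopMeasure μ ∧ ∀ A : Set X, IsOpen A ∨ IsClosed A → μ A = 0 ∨ μ A = 1

/-- A simple quasi-integral: its corresponding topological measure assumes only 0 and 1. -/
def IsSimpleQI [TopologicalSpace X] (ρ : C_c(X, ℝ) → ℝ) : Prop :=
  ∀ A : Set X, IsOpen A ∨ IsClosed A → qiMeas ρ A = 0 ∨ qiMeas ρ A = 1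

/-- An almost simple quasi-integral: its corresponding topological measure is a positive
scalar multiple of a simple topological measure. -/
def IsAlmostSimpleQI [TopologicalSpace X] (ρ : C_c(X, ℝ) → ℝ) : Prop :=
  ∃ (c : ℝ≥0∞) (μ' : Set X → ℝ≥0∞), 0 < c ∧ c ≠ ∞ ∧ IsSimpleTM μ' ∧
    ∀ A : Set X, IsOpen A ∨ IsClosed A → qiMeas ρ A = c * μ' A

/-- The composition `φ ∘ f` as an element of `C_c(X, ℝ)`, for continuous `φ` with `φ 0 = 0`. -/
noncomputable def compCc [TopologicalSpace X] (φ : C(ℝ, ℝ)) (hφ : φ 0 = 0)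
    (f : C_c(X, ℝ)) : C_c(X, ℝ) :=
  ⟨⟨fun x => φ (f x), φ.continuous.comp f.continuous⟩, f.hasCompactSupport'.comp_left hφ⟩

section Products

variable [TopologicalSpace X] [TopologicalSpace Y]

/-- The section `f_y ∈ C_c(X)` of `f ∈ C_c(X × Y)`, `f_y (x) = f (x, y)`. -/
noncomputable def fiberY [T2Space X] (f : C_c(X × Y, ℝ)) (y : Y) : C_c(X, ℝ) :=
  ⟨⟨fun x => f (x, y), f.continuous.comp (continuous_id.prodMk continuous_const)⟩,
    HasCompactSupport.intro (f.hasCompactSupport'.image continuous_fst)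
      (fun x hx => by
        by_contra h
        exact hx ⟨(x, y), subset_tsupport _ h, rfl⟩)⟩

/-- The section `f_x ∈ C_c(Y)` of `f ∈ C_c(X × Y)`, `f_x (y) = f (x, y)`. -/
noncomputable def fiberX [T2Space Y] (f : C_c(X × Y, ℝ)) (x : X) : C_c(Y, ℝ) :=
  ⟨⟨fun y => f (x, y), f.continuous.comp (continuous_const.prodMk continuous_id)⟩,
    HasCompactSupport.intro (f.hasCompactSupport'.image continuous_snd)
      (fun y hy => by
        by_contra h
        exact hy ⟨(x, y), subset_tsupport _ h, rfl⟩)⟩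

/-- `T_ρ(f) (y) = ρ (f_y)` as a bare function on `Y`. -/
noncomputable def Tmap [T2Space X] (ρ : C_c(X, ℝ) → ℝ) (f : C_c(X × Y, ℝ)) : Y → ℝ :=
  fun y => ρ (fiberY f y)

/-- `S_η(f) (x) = η (f_x)` as a bare function on `X`. -/
noncomputable def Smap [T2Space Y] (η : C_c(Y, ℝ) → ℝ) (f : C_c(X × Y, ℝ)) : X → ℝ :=
  fun x => η (fiberX f x)

open Classical in
/-- `T_ρ(f)` as an element of `C_c(Y, ℝ)` (when `ρ` is a quasi-integral, `T_ρ(f)` is indeed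
continuous with compact support, and this definition takes the first branch). -/
noncomputable def TCc [T2Space X] (ρ : C_c(X, ℝ) → ℝ) (f : C_c(X × Y, ℝ)) : C_c(Y, ℝ) :=
  if h : Continuous (Tmap ρ f) ∧ HasCompactSupport (Tmap ρ f)
  then ⟨⟨Tmap ρ f, h.1⟩, h.2⟩ else 0

open Classical in
/-- `S_η(f)` as an element of `C_c(X, ℝ)`. -/
noncomputable def SCc [T2Space Y] (η : C_c(Y, ℝ) → ℝ) (f : C_c(X × Y, ℝ)) : C_c(X, ℝ) :=
  if h : Continuous (Smap η f) ∧ HasCompactSupport (Smap η f)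
  then ⟨⟨Smap η f, h.1⟩, h.2⟩ else 0

/-- The repeated quasi-integral `(η × ρ) (f) = η (T_ρ (f))`. -/
noncomputable def prodQI [T2Space X] (η : C_c(Y, ℝ) → ℝ) (ρ : C_c(X, ℝ) → ℝ) :
    C_c(X × Y, ℝ) → ℝ := fun f => η (TCc ρ f)

/-- The repeated quasi-integral `(ρ × η) (f) = ρ (S_η (f))`. -/
noncomputable def prodQI' [T2Space Y] (ρ : C_c(X, ℝ) → ℝ) (η : C_c(Y, ℝ) → ℝ) :
    C_c(X × Y, ℝ) → ℝ := fun f => ρ (SCc η f)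

/-- The tensor product `(g ⊗ h) (x, y) = g (x) * h (y)` as an element of `C_c(X × Y, ℝ)`. -/
noncomputable def tensor (g : C_c(X, ℝ)) (h : C_c(Y, ℝ)) : C_c(X × Y, ℝ) :=
  ⟨⟨fun p => g p.1 * h p.2,
      (g.continuous.comp continuous_fst).mul (h.continuous.comp continuous_snd)⟩,
    HasCompactSupport.intro' (g.hasCompactSupport'.prod h.hasCompactSupport')
      ((isClosed_tsupport _).prod (isClosed_tsupport _))
      (fun p hp => by
        rcases not_and_or.mp (by simpa [Set.mem_prod] using hp) with h1 | h1
        · simp [image_eq_zero_of_notMem_tsupport h1]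
        · simp [image_eq_zero_of_notMem_tsupport h1])⟩

end Products

/-- A topological measure is subadditive (equivalently, extends to a Borel measure). -/
def IsSubadditiveOnOpens [TopologicalSpace X] (μ : Set X → ℝ≥0∞) : Prop :=
  ∀ U V : Set X, IsOpen U → IsOpen V → μ (U ∪ V) ≤ μ U + μ V

/-- `μ` is a positive scalar multiple of a point mass `δ_{x₀}` (on open and closed sets). -/
def IsPointMassMultiple [TopologicalSpace X] (μ : Set X → ℝ≥0∞) : Prop :=
  ∃ (c : ℝ≥0∞) (x₀ : X), 0 < c ∧ c ≠ ∞ ∧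
    ∀ A : Set X, IsOpen A ∨ IsClosed A →
      μ A = c * A.indicator (fun _ => (1 : ℝ≥0∞)) x₀

end QLF

namespace QLF

open Set ENNReal

variable {Z : Type*} [TopologicalSpace Z]

/-- Competitor predicate for `qiOpen`. -/
def Cpt (U : Set Z) (f : C_c(Z, ℝ)) : Prop :=
  (∀ x, 0 ≤ f x ∧ f x ≤ 1) ∧ tsupport f ⊆ U

theorem qiOpen_eq (τ : C_c(Z, ℝ) → ℝ) (U : Set Z) :
    qiOpen τ U = ⨆ (f : C_c(Z, ℝ)) (_ : Cpt U f), ENNReal.ofReal (τ f) := rfl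

/-- Outer value on arbitrary sets. -/
noncomputable def qiOuter (τ : C_c(Z, ℝ) → ℝ) (A : Set Z) : ℝ≥0∞ :=
  ⨅ (U : Set Z) (_ : IsOpen U ∧ A ⊆ U), qiOpen τ U

theorem qiMeas_open {τ : C_c(Z, ℝ) → ℝ} {U : Set Z} (hU : IsOpen U) :
    qiMeas τ U = qiOpen τ U := by simp only [qiMeas, if_pos hU]

theorem qiMeas_not_open {τ : C_c(Z, ℝ) → ℝ} {A : Set Z} (hA : ¬ IsOpen A) :
    qiMeas τ A = qiOuter τ A := by simp only [qiMeas, if_neg hA]; rfl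

theorem le_qiOpen {τ : C_c(Z, ℝ) → ℝ} {U : Set Z} {f : C_c(Z, ℝ)} (h : Cpt U f) :
    ENNReal.ofReal (τ f) ≤ qiOpen τ U := by
  rw [qiOpen_eq]; exact le_iSup₂ (f := fun f _ => ENNReal.ofReal (τ f)) f h

theorem qiOpen_le {τ : C_c(Z, ℝ) → ℝ} {U : Set Z} {c : ℝ≥0∞}
    (h : ∀ f : C_c(Z, ℝ), Cpt U f → ENNReal.ofReal (τ f) ≤ c) : qiOpen τ U ≤ c := by
  rw [qiOpen_eq]; exact iSup₂_le h

theorem qiOpen_mono {τ : C_c(Z, ℝ) → ℝ} {U V : Set Z} (h : U ⊆ V) :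
    qiOpen τ U ≤ qiOpen τ V :=
  qiOpen_le fun f hf => le_qiOpen ⟨hf.1, hf.2.trans h⟩

theorem qiOuter_le {τ : C_c(Z, ℝ) → ℝ} {A V : Set Z} (hV : IsOpen V) (h : A ⊆ V) :
    qiOuter τ A ≤ qiOpen τ V := iInf₂_le V ⟨hV, h⟩

theorem le_qiOuter {τ : C_c(Z, ℝ) → ℝ} {A : Set Z} {c : ℝ≥0∞}
    (h : ∀ V : Set Z, IsOpen V → A ⊆ V → c ≤ qiOpen τ V) : c ≤ qiOuter τ A :=
  le_iInf₂ fun V hV => h V hV.1 hV.2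

theorem qiOuter_of_open {τ : C_c(Z, ℝ) → ℝ} {A : Set Z} (hA : IsOpen A) :
    qiOuter τ A = qiOpen τ A :=
  le_antisymm (qiOuter_le hA subset_rfl) (le_qiOuter fun _ _ h => qiOpen_mono h)

theorem IsQuasiIntegral.map_zero {τ : C_c(Z, ℝ) → ℝ} (hτ : IsQuasiIntegral τ) : τ 0 = 0 := by
  have h := hτ.smul 0 0
  rw [zero_smul] at h
  linarith

theorem qiOpen_empty {τ : C_c(Z, ℝ) → ℝ} (hτ : IsQuasiIntegral τ) : qiOpen τ (∅ : Set Z) = 0 := by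
  refine le_antisymm (qiOpen_le fun f hf => ?_) zero_le
  have hf0 : f = 0 := by
    ext x
    by_contra h
    exact (hf.2 (subset_closure h)) 
  simp [hf0, hτ.map_zero]

theorem compCc_apply {φ : C(ℝ, ℝ)} {hφ : φ 0 = 0} {f : C_c(Z, ℝ)} (x : Z) :
    compCc φ hφ f x = φ (f x) := rfl

theorem inB_compCc (φ : C(ℝ, ℝ)) (hφ : φ 0 = 0) (f : C_c(Z, ℝ)) :
    InB f (compCc φ hφ f) := ⟨φ, hφ, fun _ => rfl⟩

/-- Every element of `C_c` is bounded above by some `M ≥ 1`. -/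
theorem exists_bound (f : C_c(Z, ℝ)) : ∃ M : ℝ, 1 ≤ M ∧ ∀ x, f x ≤ M := by
  obtain ⟨M₀, hM₀⟩ := (f.hasCompactSupport'.image f.continuous).bddAbove
  refine ⟨max M₀ 1, le_max_right _ _, fun x => ?_⟩
  by_cases hx : x ∈ tsupport f
  · exact le_trans (hM₀ ⟨x, hx, rfl⟩) (le_max_left _ _)
  · rw [image_eq_zero_of_notMem_tsupport hx]
    exact le_trans zero_le_one (le_max_right _ _)

/-- If the total (open) value vanishes, the functional is zero on nonneg functions. -/
theorem zero_on_nonneg {τ : C_c(Z, ℝ) → ℝ} (hτ : IsQuasiIntegral τ)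
    (h0 : qiOpen τ (univ : Set Z) = 0) {f : C_c(Z, ℝ)} (hf : ∀ x, 0 ≤ f x) : τ f = 0 := by
  obtain ⟨M, hM1, hMf⟩ := exists_bound f
  have hM0 : (0:ℝ) < M := lt_of_lt_of_le one_pos hM1
  set g : C_c(Z, ℝ) := M⁻¹ • f with hg
  have hgc : Cpt univ g := by
    refine ⟨fun x => ?_, subset_univ _⟩
    constructor
    · exact mul_nonneg (by positivity) (hf x)
    · rw [show g x = M⁻¹ * f x from rfl]
      rw [inv_mul_le_iff₀ hM0, mul_one]
      exact hMf x
  have h1 : ENNReal.ofReal (τ g) ≤ 0 := h0 ▸ le_qiOpen hgc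
  have h2 : τ g ≤ 0 := by
    rw [le_zero_iff, ENNReal.ofReal_eq_zero] at h1
    exact h1
  have h3 : 0 ≤ τ g := hτ.pos g fun x => (hgc.1 x).1
  have h4 : τ g = 0 := le_antisymm h2 h3
  have h5 : f = M • g := by rw [hg, smul_smul, mul_inv_cancel₀ hM0.ne', one_smul]
  rw [h5, hτ.smul, h4, mul_zero]

/-- If the total (open) value vanishes, the functional is identically zero. -/
theorem zero_of_total_zero {τ : C_c(Z, ℝ) → ℝ} (hτ : IsQuasiIntegral τ)
    (h0 : qiOpen τ (univ : Set Z) = 0) (f : C_c(Z, ℝ)) : τ f = 0 := by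
  set φP : C(ℝ, ℝ) := ⟨fun t => max t 0, by continuity⟩ with hφP
  set φN : C(ℝ, ℝ) := ⟨fun t => min t 0, by continuity⟩ with hφN
  set φM : C(ℝ, ℝ) := ⟨fun t => max (-t) 0, by continuity⟩ with hφM
  have hP0 : φP 0 = 0 := by simp [hφP]
  have hN0 : φN 0 = 0 := by simp [hφN]
  have hM0 : φM 0 = 0 := by simp [hφM]
  have hsplit : f = compCc φP hP0 f + compCc φN hN0 f := by
    ext x
    show f x = max (f x) 0 + min (f x) 0
    rcases le_total (f x) 0 with h | h
    · rw [max_eq_right h, min_eq_left h, zero_add]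
    · rw [max_eq_left h, min_eq_right h, add_zero]
  have hadd : τ (compCc φP hP0 f + compCc φN hN0 f) = τ (compCc φP hP0 f) + τ (compCc φN hN0 f) :=
    hτ.add f _ _ (inB_compCc _ _ _) (inB_compCc _ _ _)
  have h1 : τ (compCc φP hP0 f) = 0 :=
    zero_on_nonneg hτ h0 (fun x => le_max_right _ _)
  have hneg : compCc φN hN0 f = (-1 : ℝ) • compCc φM hM0 f := by
    ext x
    show min (f x) 0 = -1 * max (-f x) 0
    rcases le_total (f x) 0 with h | h
    · rw [min_eq_left h, max_eq_left (by linarith)]; ring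
    · rw [min_eq_right h, max_eq_right (by linarith)]; ring
  have h2 : τ (compCc φN hN0 f) = 0 := by
    rw [hneg, hτ.smul, zero_on_nonneg hτ h0 (fun x => le_max_right _ _), mul_zero]
  calc τ f = τ (compCc φP hP0 f + compCc φN hN0 f) := by rw [← hsplit]
  _ = 0 := by rw [hadd, h1, h2, add_zero]


section Simple

variable {τ : C_c(Z, ℝ) → ℝ}

theorem simple_on_opens (hs : IsSimpleQI τ) {U : Set Z} (hU : IsOpen U) :
    qiOpen τ U = 0 ∨ qiOpen τ U = 1 := by
  have := hs U (Or.inl hU)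
  rwa [qiMeas_open hU] at this

theorem qiOuter_simple (hs : IsSimpleQI τ) (A : Set Z) :
    qiOuter τ A = 0 ∨ qiOuter τ A = 1 := by
  by_cases h : ∃ V : Set Z, (IsOpen V ∧ A ⊆ V) ∧ qiOpen τ V = 0
  · obtain ⟨V, ⟨hV, hAV⟩, h0⟩ := h
    left
    exact le_antisymm (h0 ▸ qiOuter_le hV hAV) zero_le
  · push_neg at h
    right
    refine le_antisymm ?_ (le_qiOuter fun V hV hAV => ?_)
    · have h1 : qiOpen τ (univ : Set Z) = 1 := by
        rcases simple_on_opens hs isOpen_univ with h' | h'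
        · exact absurd h' (h univ ⟨isOpen_univ, subset_univ _⟩)
        · exact h'
      exact h1 ▸ qiOuter_le isOpen_univ (subset_univ _)
    · rcases simple_on_opens hs hV with h' | h'
      · exact absurd h' (h V ⟨hV, hAV⟩)
      · exact h'.symm.le

/-- To verify simplicity it is enough to consider open sets. -/
theorem isSimpleQI_of_open (h : ∀ U : Set Z, IsOpen U → qiOpen τ U = 0 ∨ qiOpen τ U = 1) :
    IsSimpleQI τ := by
  intro A _
  by_cases hA : IsOpen A
  · rw [qiMeas_open hA]; exact h A hA
  · rw [qiMeas_not_open hA]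
    -- same argument as qiOuter_simple but from the open hypothesis
    by_cases hex : ∃ V : Set Z, (IsOpen V ∧ A ⊆ V) ∧ qiOpen τ V = 0
    · obtain ⟨V, ⟨hV, hAV⟩, h0⟩ := hex
      left
      exact le_antisymm (h0 ▸ qiOuter_le hV hAV) zero_le
    · push_neg at hex
      right
      refine le_antisymm ?_ (le_qiOuter fun V hV hAV => ?_)
      · have h1 : qiOpen τ (univ : Set Z) = 1 := by
          rcases h univ isOpen_univ with h' | h'
          · exact absurd h' (hex univ ⟨isOpen_univ, subset_univ _⟩)
          · exact h'
        exact h1 ▸ qiOuter_le isOpen_univ (subset_univ _)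
      · rcases h V hV with h' | h'
        · exact absurd h' (hex V ⟨hV, hAV⟩)
        · exact h'.symm.le

theorem bounded_of_total_le_one (htot : qiOpen τ (univ : Set Z) ≤ 1)
    {g : C_c(Z, ℝ)} (hg : ∀ x, 0 ≤ g x ∧ g x ≤ 1) : τ g ≤ 1 := by
  have h := le_trans (le_qiOpen (U := univ) ⟨hg, subset_univ _⟩) htot
  exact ENNReal.ofReal_le_one.mp h

/-- The key comparison lemma: if `0 ≤ a ≤ c`, `0 ≤ b ≤ c` and `b = c` on `tsupport a`,
then `τ a ≤ τ b`.  Both `a` and `b - a` lie in `B(a+b)`. -/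
theorem mstar (hτ : IsQuasiIntegral τ) {a b : C_c(Z, ℝ)} {c : ℝ} (hc : 0 < c)
    (ha : ∀ x, 0 ≤ a x ∧ a x ≤ c) (hb : ∀ x, 0 ≤ b x ∧ b x ≤ c)
    (hbc : ∀ x ∈ tsupport a, b x = c) : τ a ≤ τ b := by
  set φA : C(ℝ, ℝ) := ⟨fun t => max (t - c) 0, by continuity⟩ with hφA
  set φD : C(ℝ, ℝ) := ⟨fun t => min t c - max (t - c) 0, by continuity⟩ with hφD
  have hA0 : φA 0 = 0 := by
    simp only [hφA, ContinuousMap.coe_mk]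
    rw [max_eq_right (by linarith : (0:ℝ) - c ≤ 0)]
  have hD0 : φD 0 = 0 := by
    simp only [hφD, ContinuousMap.coe_mk]
    rw [min_eq_left hc.le, max_eq_right (by linarith : (0:ℝ) - c ≤ 0)]
    ring
  have key : ∀ x, a x = φA ((a + b) x) ∧ (b - a) x = φD ((a + b) x) := by
    intro x
    rcases eq_or_lt_of_le (ha x).1 with h0 | h0
    · have hab : (a + b) x = b x := by
        show a x + b x = b x
        rw [← h0, zero_add]
      constructor
      · show a x = max ((a+b) x - c) 0
        rw [hab, ← h0, max_eq_right (by linarith [(hb x).2])]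
      · show b x - a x = min ((a+b) x) c - max ((a+b) x - c) 0
        rw [hab, ← h0, min_eq_left (hb x).2, max_eq_right (by linarith [(hb x).2])]
    · have hx : x ∈ tsupport a := subset_closure (by
        simp only [Function.mem_support]
        exact ne_of_gt h0)
      have hbx : b x = c := hbc x hx
      have hab : (a + b) x = a x + c := by
        show a x + b x = a x + c
        rw [hbx]
      constructor
      · show a x = max ((a+b) x - c) 0
        rw [hab, max_eq_left (by linarith)]
        ring
      · show b x - a x = min ((a+b) x) c - max ((a+b) x - c) 0
        rw [hab, min_eq_right (by linarith), max_eq_left (by linarith), hbx]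
        ring
  have h1 : InB (a + b) a := ⟨φA, hA0, fun x => (key x).1⟩
  have h2 : InB (a + b) (b - a) := ⟨φD, hD0, fun x => (key x).2⟩
  have hadd : τ (a + (b - a)) = τ a + τ (b - a) := hτ.add (a + b) a (b - a) h1 h2
  have hba : a + (b - a) = b := by abel
  rw [hba] at hadd
  have hpos : 0 ≤ τ (b - a) := by
    refine hτ.pos _ fun x => ?_
    show 0 ≤ b x - a x
    rcases eq_or_lt_of_le (ha x).1 with h0 | h0
    · rw [← h0]; linarith [(hb x).1]
    · have hx : x ∈ tsupport a := subset_closure (by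
        simp only [Function.mem_support]; exact ne_of_gt h0)
      rw [hbc x hx]; linarith [(ha x).2]
  linarith

/-- Gem additivity: if `u ∈ [0,1]` equals `1` on `tsupport p` and `p ≥ 0`, then
`τ (p + ε•u) = τ p + ε * τ u`. -/
theorem gem_add (hτ : IsQuasiIntegral τ) {p u : C_c(Z, ℝ)} (hp : ∀ x, 0 ≤ p x)
    (hu : ∀ x, 0 ≤ u x ∧ u x ≤ 1) (hu1 : ∀ x ∈ tsupport p, u x = 1) (ε : ℝ) :
    τ (p + ε • u) = τ p + ε * τ u := by
  set φA : C(ℝ, ℝ) := ⟨fun t => max (t - 1) 0, by continuity⟩ with hφA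
  set φB : C(ℝ, ℝ) := ⟨fun t => ε * min t 1, by continuity⟩ with hφB
  have hA0 : φA 0 = 0 := by simp [hφA]
  have hB0 : φB 0 = 0 := by simp [hφB]
  have key : ∀ x, p x = φA ((p + u) x) ∧ (ε • u) x = φB ((p + u) x) := by
    intro x
    rcases eq_or_lt_of_le (hp x) with h0 | h0
    · have hab : (p + u) x = u x := by show p x + u x = u x; rw [← h0, zero_add]
      constructor
      · show p x = max ((p+u) x - 1) 0
        rw [hab, ← h0, max_eq_right (by linarith [(hu x).2])]
      · show ε * u x = ε * min ((p+u) x) 1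
        rw [hab, min_eq_left (hu x).2]
    · have hx : x ∈ tsupport p := subset_closure (by
        simp only [Function.mem_support]; exact ne_of_gt h0)
      have hux : u x = 1 := hu1 x hx
      have hab : (p + u) x = p x + 1 := by show p x + u x = p x + 1; rw [hux]
      constructor
      · show p x = max ((p+u) x - 1) 0
        rw [hab, max_eq_left (by linarith)]; ring
      · show ε * u x = ε * min ((p+u) x) 1
        rw [hab, min_eq_right (by linarith), hux]
  have h1 : InB (p + u) p := ⟨φA, hA0, fun x => (key x).1⟩
  have h2 : InB (p + u) (ε • u) := ⟨φB, hB0, fun x => (key x).2⟩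
  have hadd : τ (p + ε • u) = τ p + τ (ε • u) := hτ.add (p + u) p (ε • u) h1 h2
  rw [hadd, hτ.smul]

end Simple


section Mono

variable {τ : C_c(Z, ℝ) → ℝ}

set_option maxHeartbeats 1000000 in
/-- Monotonicity of quasi-integrals with total value at most 1. -/
theorem qi_mono (hτ : IsQuasiIntegral τ) (htot : qiOpen τ (univ : Set Z) ≤ 1)
    {f h : C_c(Z, ℝ)} (hf0 : ∀ x, 0 ≤ f x) (hfh : ∀ x, f x ≤ h x) : τ f ≤ τ h := by
  obtain ⟨M, hM1, hMh⟩ := exists_bound h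
  have hM0 : (0:ℝ) < M := lt_of_lt_of_le one_pos hM1
  have key : ∀ m : ℕ, τ f ≤ τ h + M / (m + 1) := by
    intro m
    set n : ℕ := m + 1 with hn
    set δ : ℝ := M / n with hδdef
    have hδ : 0 < δ := by positivity
    -- the level functions
    set χ : ℕ → C(ℝ, ℝ) := fun k =>
      ⟨fun t => min t ((k + 1 : ℝ) * δ) - min t ((k : ℝ) * δ), by continuity⟩ with hχ
    have hχ0 : ∀ k : ℕ, χ k 0 = 0 := by
      intro k
      simp only [hχ, ContinuousMap.coe_mk]
      rw [min_eq_left (by positivity), min_eq_left (by positivity)]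
      ring
    have hχval : ∀ (k : ℕ) (t : ℝ), 0 ≤ χ k t ∧ χ k t ≤ δ := by
      intro k t
      simp only [hχ, ContinuousMap.coe_mk]
      have hkk : (k : ℝ) * δ ≤ (k + 1 : ℝ) * δ := by nlinarith
      constructor
      · have : min t ((k : ℝ) * δ) ≤ min t ((k + 1 : ℝ) * δ) := min_le_min le_rfl hkk
        linarith
      · rcases le_total t ((k : ℝ) * δ) with ht | ht
        · rw [min_eq_left ht, min_eq_left (le_trans ht hkk)]; linarith
        · rw [min_eq_right ht]
          have : min t ((k + 1 : ℝ) * δ) ≤ (k + 1 : ℝ) * δ := min_le_right _ _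
          linarith
    set ψ : ℕ → C(ℝ, ℝ) := fun k => ⟨fun t => min t ((k : ℝ) * δ), by continuity⟩ with hψ
    have hψ0 : ∀ k : ℕ, ψ k 0 = 0 := by
      intro k
      simp only [hψ, ContinuousMap.coe_mk]
      exact min_eq_left (by positivity)
    -- telescoping sum within B(g) for any nonneg g
    have hsum : ∀ g : C_c(Z, ℝ), (∀ x, 0 ≤ g x) →
        ∀ N : ℕ, τ (compCc (ψ N) (hψ0 N) g) =
          ∑ k ∈ Finset.range N, τ (compCc (χ k) (hχ0 k) g) := by
      intro g hg N
      induction N with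
      | zero =>
        have : compCc (ψ 0) (hψ0 0) g = 0 := by
          ext x
          have : compCc (ψ 0) (hψ0 0) g x = min (g x) ((0 : ℕ) * δ) := rfl
          rw [this]
          have h0 : ((0:ℕ):ℝ) * δ = 0 := by push_cast; ring
          rw [h0, min_eq_right (hg x)]
          rfl
        rw [this, hτ.map_zero, Finset.sum_range_zero]
      | succ N ih =>
        have hdec : compCc (ψ (N+1)) (hψ0 (N+1)) g
            = compCc (ψ N) (hψ0 N) g + compCc (χ N) (hχ0 N) g := by
          ext x
          show min (g x) ((N + 1 : ℕ) * δ)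
            = min (g x) ((N:ℝ) * δ) + (min (g x) ((N + 1 : ℝ) * δ) - min (g x) ((N:ℝ) * δ))
          push_cast
          ring
        rw [hdec, hτ.add g _ _ (inB_compCc _ _ _) (inB_compCc _ _ _), ih,
          Finset.sum_range_succ]
    -- the full functions are recovered at level n
    have hNδ : (n : ℝ) * δ = M := by
      rw [hδdef]
      field_simp
      exact div_self (Nat.cast_ne_zero.mpr (by omega))
    have hff : compCc (ψ n) (hψ0 n) f = f := by
      ext x
      show min (f x) ((n : ℝ) * δ) = f x
      rw [hNδ]
      exact min_eq_left (le_trans (hfh x) (hMh x))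
    have hhh : compCc (ψ n) (hψ0 n) h = h := by
      ext x
      show min (h x) ((n : ℝ) * δ) = h x
      rw [hNδ]
      exact min_eq_left (hMh x)
    have hh0 : ∀ x, 0 ≤ h x := fun x => le_trans (hf0 x) (hfh x)
    -- first piece of f is at most δ
    have hfirst : τ (compCc (χ 0) (hχ0 0) f) ≤ δ := by
      set g : C_c(Z, ℝ) := δ⁻¹ • compCc (χ 0) (hχ0 0) f with hg
      have hgb : ∀ x, 0 ≤ g x ∧ g x ≤ 1 := by
        intro x
        have := hχval 0 (f x)
        have h1 : g x = δ⁻¹ * χ 0 (f x) := rfl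
        constructor
        · rw [h1]; exact mul_nonneg (by positivity) this.1
        · rw [h1, inv_mul_le_iff₀ hδ, mul_one]; exact this.2
      have h2 : τ g ≤ 1 := bounded_of_total_le_one htot hgb
      have h3 : compCc (χ 0) (hχ0 0) f = δ • g := by
        rw [hg, smul_smul, mul_inv_cancel₀ hδ.ne', one_smul]
      rw [h3, hτ.smul]
      nlinarith
    -- cross comparison
    have hcross : ∀ k : ℕ, τ (compCc (χ (k+1)) (hχ0 (k+1)) f) ≤ τ (compCc (χ k) (hχ0 k) h) := by
      intro k
      refine mstar hτ hδ (fun x => hχval (k+1) (f x)) (fun x => hχval k (h x)) ?_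
      intro x hx
      have hS : tsupport (compCc (χ (k+1)) (hχ0 (k+1)) f)
          ⊆ (⇑f) ⁻¹' (Set.Ici (((k:ℝ)+1) * δ)) := by
        apply closure_minimal _ (isClosed_Ici.preimage f.continuous)
        intro z hz
        have hz' : χ (k+1) (f z) ≠ 0 := hz
        simp only [hχ, ContinuousMap.coe_mk] at hz'
        simp only [Set.mem_preimage, Set.mem_Ici]
        by_contra hcon
        push_neg at hcon
        have hcon2 : f z < ((k:ℝ)+1) * δ := hcon
        apply hz'
        have hc1 : ((k+1:ℕ):ℝ) * δ = ((k:ℝ)+1) * δ := by push_cast; ring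
        have h2 : f z ≤ ((k+1:ℕ):ℝ) * δ := by rw [hc1]; linarith
        have h1 : f z ≤ (((k+1:ℕ):ℝ)+1) * δ := by nlinarith [hδ.le, h2]
        rw [min_eq_left h1, min_eq_left h2]
        ring
      have hfx : ((k:ℝ)+1) * δ ≤ f x := hS hx
      have hhx : ((k:ℝ)+1) * δ ≤ h x := le_trans hfx (hfh x)
      have e0 : compCc (χ k) (hχ0 k) h x
          = min (h x) (((k:ℝ)+1) * δ) - min (h x) ((k:ℝ) * δ) := rfl
      have e1 : min (h x) (((k:ℝ)+1) * δ) = ((k:ℝ)+1) * δ := min_eq_right hhx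
      have e2' : (k:ℝ) * δ ≤ h x := by nlinarith [hhx, hδ.le]
      have e2 : min (h x) ((k:ℝ) * δ) = (k:ℝ) * δ := min_eq_right e2'
      rw [e0, e1, e2]
      ring
    -- combine
    have hτf : τ f = ∑ k ∈ Finset.range n, τ (compCc (χ k) (hχ0 k) f) := by
      rw [← hsum f hf0 n, hff]
    have hτh : τ h = ∑ k ∈ Finset.range n, τ (compCc (χ k) (hχ0 k) h) := by
      rw [← hsum h hh0 n, hhh]
    have hsplit : ∑ k ∈ Finset.range n, τ (compCc (χ k) (hχ0 k) f)
        = (∑ k ∈ Finset.range m, τ (compCc (χ (k+1)) (hχ0 (k+1)) f))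
          + τ (compCc (χ 0) (hχ0 0) f) := Finset.sum_range_succ' _ m
    have hle1 : ∑ k ∈ Finset.range m, τ (compCc (χ (k+1)) (hχ0 (k+1)) f)
        ≤ ∑ k ∈ Finset.range m, τ (compCc (χ k) (hχ0 k) h) :=
      Finset.sum_le_sum fun k _ => hcross k
    have hle2 : ∑ k ∈ Finset.range m, τ (compCc (χ k) (hχ0 k) h)
        ≤ ∑ k ∈ Finset.range n, τ (compCc (χ k) (hχ0 k) h) := by
      refine Finset.sum_le_sum_of_subset_of_nonneg
        (Finset.range_subset_range.mpr (by omega)) fun k _ _ => ?_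
      exact hτ.pos _ fun x => (hχval k (h x)).1
    have hfin : τ f ≤ τ h + δ := by
      calc τ f = ∑ k ∈ Finset.range n, τ (compCc (χ k) (hχ0 k) f) := hτf
      _ = (∑ k ∈ Finset.range m, τ (compCc (χ (k+1)) (hχ0 (k+1)) f))
          + τ (compCc (χ 0) (hχ0 0) f) := hsplit
      _ ≤ (∑ k ∈ Finset.range m, τ (compCc (χ k) (hχ0 k) h)) + δ := add_le_add hle1 hfirst
      _ ≤ (∑ k ∈ Finset.range n, τ (compCc (χ k) (hχ0 k) h)) + δ := by linarith [hle2]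
      _ = τ h + δ := by rw [← hτh]
    have hδM : δ = M / (m + 1) := by rw [hδdef, hn]; push_cast; ring_nf
    linarith [hfin, hδM.symm.le]
  refine le_of_forall_pos_le_add fun ε hε => ?_
  obtain ⟨m, hm⟩ := exists_nat_gt (M / ε)
  have h1 : M / (m + 1) ≤ ε := by
    rw [div_le_iff₀ (by positivity)]
    have h2 : M / ε < m + 1 := lt_of_lt_of_le hm (by linarith)
    rw [div_lt_iff₀ hε] at h2
    linarith
  linarith [key m]

end Mono


section Upper

variable {τ : C_c(Z, ℝ) → ℝ}

theorem qiOuter_le_total (τ : C_c(Z, ℝ) → ℝ) (A : Set Z) :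
    qiOuter τ A ≤ qiOpen τ (univ : Set Z) :=
  qiOuter_le isOpen_univ (subset_univ _)

/-- Vanishing on nonneg functions supported in a null open set. -/
theorem zero_on_nonneg' (hτ : IsQuasiIntegral τ) {V : Set Z} (h0 : qiOpen τ V = 0)
    {f : C_c(Z, ℝ)} (hf : ∀ x, 0 ≤ f x) (hsupp : tsupport f ⊆ V) : τ f = 0 := by
  obtain ⟨M, hM1, hMf⟩ := exists_bound f
  have hM0 : (0:ℝ) < M := lt_of_lt_of_le one_pos hM1
  set g : C_c(Z, ℝ) := M⁻¹ • f with hg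
  have hgsupp : tsupport g ⊆ V := by
    refine subset_trans (closure_minimal ?_ (isClosed_tsupport f)) hsupp
    intro x hx
    simp only [Function.mem_support] at hx
    have : g x = M⁻¹ * f x := rfl
    by_contra hxx
    exact hx (by rw [this, image_eq_zero_of_notMem_tsupport hxx, mul_zero])
  have hgc : Cpt V g := by
    refine ⟨fun x => ⟨mul_nonneg (by positivity) (hf x), ?_⟩, hgsupp⟩
    show M⁻¹ * f x ≤ 1
    rw [inv_mul_le_iff₀ hM0, mul_one]
    exact hMf x
  have h1 : ENNReal.ofReal (τ g) ≤ 0 := h0 ▸ le_qiOpen hgc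
  rw [le_zero_iff, ENNReal.ofReal_eq_zero] at h1
  have h3 : 0 ≤ τ g := hτ.pos g fun x => (hgc.1 x).1
  have h5 : f = M • g := by rw [hg, smul_smul, mul_inv_cancel₀ hM0.ne', one_smul]
  rw [h5, hτ.smul, le_antisymm h1 h3, mul_zero]

/-- The fundamental upper bound: `τ g ≤ δ + qiOuter τ {g ≥ δ}` for `g ∈ [0,1]`. -/
theorem t1_upper (hτ : IsQuasiIntegral τ) (htot : qiOpen τ (univ : Set Z) ≤ 1)
    {g : C_c(Z, ℝ)} (hg : ∀ y, 0 ≤ g y ∧ g y ≤ 1) {δ : ℝ} (hδ : 0 < δ) :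
    τ g ≤ δ + (qiOuter τ ((⇑g) ⁻¹' Ici δ)).toReal := by
  set φm : C(ℝ, ℝ) := ⟨fun t => min t δ, by continuity⟩ with hφm
  set φr : C(ℝ, ℝ) := ⟨fun t => max (t - δ) 0, by continuity⟩ with hφr
  have hm0 : φm 0 = 0 := by simp only [hφm, ContinuousMap.coe_mk]; exact min_eq_left hδ.le
  have hr0 : φr 0 = 0 := by
    simp only [hφr, ContinuousMap.coe_mk]
    exact max_eq_right (by linarith)
  have hsplit : g = compCc φm hm0 g + compCc φr hr0 g := by
    ext y
    show g y = min (g y) δ + max (g y - δ) 0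
    rcases le_total (g y) δ with h | h
    · rw [min_eq_left h, max_eq_right (by linarith)]; ring
    · rw [min_eq_right h, max_eq_left (by linarith)]; ring
  have hadd : τ g = τ (compCc φm hm0 g) + τ (compCc φr hr0 g) := by
    nth_rewrite 1 [hsplit]
    exact hτ.add g _ _ (inB_compCc _ _ _) (inB_compCc _ _ _)
  -- first piece is at most δ
  have hmle : τ (compCc φm hm0 g) ≤ δ := by
    set q : C_c(Z, ℝ) := δ⁻¹ • compCc φm hm0 g with hq
    have hqb : ∀ y, 0 ≤ q y ∧ q y ≤ 1 := by
      intro y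
      have h1 : q y = δ⁻¹ * min (g y) δ := rfl
      constructor
      · rw [h1]; exact mul_nonneg (by positivity) (le_min (hg y).1 hδ.le)
      · rw [h1, inv_mul_le_iff₀ hδ, mul_one]; exact min_le_right _ _
    have h2 : τ q ≤ 1 := bounded_of_total_le_one htot hqb
    have h3 : compCc φm hm0 g = δ • q := by
      rw [hq, smul_smul, mul_inv_cancel₀ hδ.ne', one_smul]
    rw [h3, hτ.smul]
    nlinarith
  -- second piece is controlled by the outer value of {g ≥ δ}
  have hrle : τ (compCc φr hr0 g) ≤ (qiOuter τ ((⇑g) ⁻¹' Ici δ)).toReal := by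
    set r := compCc φr hr0 g with hrdef
    have hrsupp : tsupport (⇑r) ⊆ (⇑g) ⁻¹' Ici δ := by
      apply closure_minimal _ (isClosed_Ici.preimage g.continuous)
      intro z hz
      have hz' : max (g z - δ) 0 ≠ 0 := hz
      simp only [Set.mem_preimage, Set.mem_Ici]
      by_contra hcon
      push_neg at hcon
      have hcon2 : g z < δ := hcon
      exact hz' (max_eq_right (by linarith))
    have hcpt : ∀ V : Set Z, IsOpen V → ((⇑g) ⁻¹' Ici δ) ⊆ V → Cpt V r := by
      intro V hV hKV
      refine ⟨fun y => ⟨le_max_right _ _, ?_⟩, hrsupp.trans hKV⟩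
      show max (g y - δ) 0 ≤ 1
      rcases le_total (g y - δ) 0 with h | h
      · rw [max_eq_right h]; linarith
      · rw [max_eq_left h]; linarith [(hg y).2]
    have h1 : ENNReal.ofReal (τ r) ≤ qiOuter τ ((⇑g) ⁻¹' Ici δ) :=
      le_qiOuter fun V hV hKV => le_qiOpen (hcpt V hV hKV)
    have hfin : qiOuter τ ((⇑g) ⁻¹' Ici δ) ≠ ∞ :=
      ne_top_of_le_ne_top (by simp) (le_trans (qiOuter_le_total τ _) htot)
    exact (ENNReal.ofReal_le_iff_le_toReal hfin).mp h1
  linarith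

end Upper


section Prod

variable {X Y : Type*} [TopologicalSpace X] [T2Space X] [TopologicalSpace Y] [T2Space Y]
variable {ρ : C_c(X, ℝ) → ℝ} {η : C_c(Y, ℝ) → ℝ}

theorem fiberY_apply (f : C_c(X × Y, ℝ)) (y : Y) (x : X) : fiberY f y x = f (x, y) := rfl

theorem fiberY_tsupport (f : C_c(X × Y, ℝ)) (y : Y) :
    tsupport (⇑(fiberY f y)) ⊆ {x | (x, y) ∈ tsupport f} := by
  apply closure_minimal _ ((isClosed_tsupport f).preimage (Continuous.prodMk continuous_id continuous_const))
  intro x hx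
  exact subset_tsupport _ hx

theorem tmap_apply (ρ : C_c(X, ℝ) → ℝ) (f : C_c(X × Y, ℝ)) (y : Y) :
    Tmap ρ f y = ρ (fiberY f y) := rfl

theorem tcc_coe_of {f : C_c(X × Y, ℝ)}
    (h : Continuous (Tmap ρ f) ∧ HasCompactSupport (Tmap ρ f)) :
    ⇑(TCc ρ f) = Tmap ρ f := by
  rw [TCc, dif_pos h]
  rfl

theorem tcc_of_not {f : C_c(X × Y, ℝ)}
    (h : ¬(Continuous (Tmap ρ f) ∧ HasCompactSupport (Tmap ρ f))) :
    TCc ρ f = 0 := by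
  rw [TCc, dif_neg h]

theorem tensor_apply (g : C_c(X, ℝ)) (h : C_c(Y, ℝ)) (p : X × Y) :
    tensor g h p = g p.1 * h p.2 := rfl

theorem tensor_tsupport (g : C_c(X, ℝ)) (h : C_c(Y, ℝ)) :
    tsupport (⇑(tensor g h)) ⊆ tsupport g ×ˢ tsupport h := by
  apply closure_minimal _ ((isClosed_tsupport g).prod (isClosed_tsupport h))
  intro p hp
  have hp' : g p.1 * h p.2 ≠ 0 := hp
  rw [Set.mem_prod]
  exact ⟨subset_tsupport _ (mul_ne_zero_iff.mp hp').1,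
    subset_tsupport _ (mul_ne_zero_iff.mp hp').2⟩

theorem tcc_tensor (hρ : IsQuasiIntegral ρ) (g : C_c(X, ℝ)) (h : C_c(Y, ℝ)) :
    TCc ρ (tensor g h) = ρ g • h := by
  have hT : Tmap ρ (tensor g h) = ⇑(ρ g • h) := by
    funext y
    show ρ (fiberY (tensor g h) y) = ρ g * h y
    have hfib : fiberY (tensor g h) y = h y • g := by
      ext x
      show g x * h y = h y * g x
      ring
    rw [hfib, hρ.smul]
    ring
  have hcond : Continuous (Tmap ρ (tensor g h)) ∧ HasCompactSupport (Tmap ρ (tensor g h)) := by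
    rw [hT]
    exact ⟨(ρ g • h).continuous, (ρ g • h).hasCompactSupport'⟩
  ext y
  rw [show TCc ρ (tensor g h) y = Tmap ρ (tensor g h) y from congrFun (tcc_coe_of hcond) y, hT]

theorem prodQI_tensor (hρ : IsQuasiIntegral ρ) (hη : IsQuasiIntegral η)
    (g : C_c(X, ℝ)) (h : C_c(Y, ℝ)) :
    prodQI η ρ (tensor g h) = ρ g * η h := by
  show η (TCc ρ (tensor g h)) = ρ g * η h
  rw [tcc_tensor hρ, hη.smul]

/-- Lower bound: the product of open values is at most the product value on the rectangle. -/
theorem prod_ge (hρ : IsQuasiIntegral ρ) (hη : IsQuasiIntegral η) (U : Set X) (V : Set Y) :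
    qiOpen ρ U * qiOpen η V ≤ qiOpen (prodQI η ρ) (U ×ˢ V) := by
  rw [qiOpen_eq ρ U, qiOpen_eq η V, ENNReal.iSup_mul]
  refine iSup_le fun g => ?_
  rw [ENNReal.iSup_mul]
  refine iSup_le fun hg => ?_
  rw [ENNReal.mul_iSup]
  refine iSup_le fun h => ?_
  rw [ENNReal.mul_iSup]
  refine iSup_le fun hh => ?_
  have h0g : 0 ≤ ρ g := hρ.pos g fun x => (hg.1 x).1
  rw [← ENNReal.ofReal_mul h0g, ← prodQI_tensor hρ hη]
  refine le_qiOpen ⟨fun p => ⟨?_, ?_⟩, ?_⟩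
  · exact mul_nonneg (hg.1 p.1).1 (hh.1 p.2).1
  · exact mul_le_one₀ (hg.1 p.1).2 (hh.1 p.2).1 (hh.1 p.2).2
  · exact (tensor_tsupport g h).trans (Set.prod_mono hg.2 hh.2)

/-- Upper bound: the product value on a rectangle is at most the product of open values. -/
theorem prod_le (hρ : IsQuasiIntegral ρ) (hη : IsQuasiIntegral η) {U : Set X} {V : Set Y} :
    qiOpen (prodQI η ρ) (U ×ˢ V) ≤ qiOpen ρ U * qiOpen η V := by
  refine qiOpen_le fun f hf => ?_
  by_cases hcond : Continuous (Tmap ρ f) ∧ HasCompactSupport (Tmap ρ f)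
  · set gC := TCc ρ f with hgCdef
    have hgC : ∀ y, gC y = ρ (fiberY f y) := fun y => congrFun (tcc_coe_of hcond) y
    have hg0 : ∀ y, 0 ≤ gC y := fun y =>
      (hgC y) ▸ hρ.pos _ (fun x => (hf.1 (x, y)).1)
    have hfib : ∀ y, Cpt U (fiberY f y) := by
      intro y
      refine ⟨fun x => hf.1 (x, y), (fiberY_tsupport f y).trans fun x hx => ?_⟩
      exact (hf.2 hx).1
    have hgU : ∀ y, ENNReal.ofReal (gC y) ≤ qiOpen ρ U := fun y =>
      (hgC y) ▸ le_qiOpen (hfib y)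
    have hsuppV : tsupport (⇑gC) ⊆ V := by
      have hSY : IsClosed (Prod.snd '' tsupport f) :=
        (f.hasCompactSupport'.image continuous_snd).isClosed
      refine subset_trans (closure_minimal ?_ hSY) ?_
      · intro y hy
        have hy' : gC y ≠ 0 := hy
        rw [hgC y] at hy'
        have hfz : fiberY f y ≠ 0 := fun h0 => hy' (by rw [h0, hρ.map_zero])
        have : ∃ x, fiberY f y x ≠ 0 := by
          by_contra hall
          push_neg at hall
          exact hfz (by ext x; exact hall x)
        obtain ⟨x, hx⟩ := this
        exact ⟨(x, y), subset_tsupport _ hx, rfl⟩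
      · rintro y ⟨p, hp, rfl⟩
        exact (hf.2 hp).2
    by_cases hU0 : qiOpen ρ U = 0
    · have hgCz : gC = 0 := by
        ext y
        have h1 : ENNReal.ofReal (gC y) ≤ 0 := hU0 ▸ hgU y
        rw [le_zero_iff, ENNReal.ofReal_eq_zero] at h1
        exact le_antisymm h1 (hg0 y)
      show ENNReal.ofReal (η (TCc ρ f)) ≤ _
      rw [← hgCdef, hgCz, hη.map_zero]
      simp
    · by_cases hUtop : qiOpen ρ U = ∞
      · by_cases hV0 : qiOpen η V = 0
        · have hη0 : η gC = 0 := zero_on_nonneg' hη hV0 hg0 hsuppV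
          show ENNReal.ofReal (η (TCc ρ f)) ≤ _
          rw [← hgCdef, hη0]
          simp
        · rw [hUtop, ENNReal.top_mul hV0]
          exact le_top
      · have ht : 0 < (qiOpen ρ U).toReal := ENNReal.toReal_pos hU0 hUtop
        set t := (qiOpen ρ U).toReal with htdef
        have hgt : ∀ y, gC y ≤ t := fun y => (ENNReal.ofReal_le_iff_le_toReal hUtop).mp (hgU y)
        by_cases hVtop : qiOpen η V = ∞
        · rw [hVtop, ENNReal.mul_top hU0]
          exact le_top
        · set q : C_c(Y, ℝ) := t⁻¹ • gC with hqdef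
          have hqb : ∀ y, 0 ≤ q y ∧ q y ≤ 1 := by
            intro y
            have h1 : q y = t⁻¹ * gC y := rfl
            constructor
            · rw [h1]; exact mul_nonneg (by positivity) (hg0 y)
            · rw [h1, inv_mul_le_iff₀ ht, mul_one]; exact hgt y
          have hqsupp : tsupport (⇑q) ⊆ V := by
            refine subset_trans (closure_mono ?_) hsuppV
            intro y hy
            have hy' : t⁻¹ * gC y ≠ 0 := hy
            exact fun h0 => hy' (by rw [show gC y = 0 from h0, mul_zero])
          have hqs : η q ≤ (qiOpen η V).toReal :=
            (ENNReal.ofReal_le_iff_le_toReal hVtop).mp (le_qiOpen ⟨hqb, hqsupp⟩)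
          have hgCeq : gC = t • q := by
            rw [hqdef, smul_smul, mul_inv_cancel₀ ht.ne', one_smul]
          have hfinal : η gC ≤ t * (qiOpen η V).toReal := by
            rw [hgCeq, hη.smul]
            exact mul_le_mul_of_nonneg_left hqs ht.le
          show ENNReal.ofReal (η (TCc ρ f)) ≤ _
          rw [← hgCdef]
          calc ENNReal.ofReal (η gC) ≤ ENNReal.ofReal (t * (qiOpen η V).toReal) :=
              ENNReal.ofReal_le_ofReal hfinal
          _ = ENNReal.ofReal t * ENNReal.ofReal ((qiOpen η V).toReal) :=
              ENNReal.ofReal_mul ht.le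
          _ = qiOpen ρ U * qiOpen η V := by
              rw [htdef, ENNReal.ofReal_toReal hUtop, ENNReal.ofReal_toReal hVtop]
  · show ENNReal.ofReal (η (TCc ρ f)) ≤ _
    rw [tcc_of_not hcond, hη.map_zero]
    simp

theorem prod_eq (hρ : IsQuasiIntegral ρ) (hη : IsQuasiIntegral η) (U : Set X) (V : Set Y) :
    qiOpen (prodQI η ρ) (U ×ˢ V) = qiOpen ρ U * qiOpen η V :=
  le_antisymm (prod_le hρ hη) (prod_ge hρ hη U V)

end Prod


section TCont

variable {X Y : Type*} [TopologicalSpace X] [T2Space X] [LocallyCompactSpace X]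
  [TopologicalSpace Y] [T2Space Y]
variable {ρ : C_c(X, ℝ) → ℝ}

/-- For a quasi-integral with total value at most one, `T_ρ f` is continuous with compact
support whenever `f ≥ 0`. -/
theorem tmap_cc (hρ : IsQuasiIntegral ρ) (htot : qiOpen ρ (univ : Set X) ≤ 1)
    (f : C_c(X × Y, ℝ)) (hf : ∀ p, 0 ≤ f p) :
    Continuous (Tmap ρ f) ∧ HasCompactSupport (Tmap ρ f) := by
  set K : Set X := Prod.fst '' tsupport f with hK
  have hKcomp : IsCompact K := f.hasCompactSupport'.image continuous_fst
  have hKclosed : IsClosed K := hKcomp.isClosed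
  obtain ⟨u, hu1, -, huHCS, hub⟩ :=
    exists_continuous_one_zero_of_isCompact hKcomp isClosed_empty (disjoint_empty _)
  set uCc : C_c(X, ℝ) := ⟨u, huHCS⟩ with huCc
  have huapp : ∀ x, uCc x = u x := fun x => rfl
  have hfibK : ∀ y : Y, tsupport (⇑(fiberY f y)) ⊆ K := fun y =>
    (fiberY_tsupport f y).trans fun x hx => ⟨(x, y), hx, rfl⟩
  have hfib0 : ∀ (y : Y) (x : X), 0 ≤ fiberY f y x := fun y x => hf (x, y)
  have hnotK : ∀ (y : Y) (x : X), x ∉ K → f (x, y) = 0 := by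
    intro y x hx
    have : (x, y) ∉ tsupport f := fun hmem => hx ⟨(x, y), hmem, rfl⟩
    exact image_eq_zero_of_notMem_tsupport this
  -- the key comparison estimate
  have hcomp : ∀ (ε : ℝ), 0 ≤ ε → ∀ y1 y2 : Y, (∀ x ∈ K, f (x, y1) ≤ f (x, y2) + ε) →
      ρ (fiberY f y1) ≤ ρ (fiberY f y2) + ε := by
    intro ε hε y1 y2 hle
    have hptwise : ∀ x, fiberY f y1 x ≤ (fiberY f y2 + ε • uCc) x := by
      intro x
      show f (x, y1) ≤ f (x, y2) + ε * u x
      by_cases hx : x ∈ K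
      · have h1 := hle x hx
        have h2 : u x = 1 := hu1 hx
        rw [h2]
        linarith
      · rw [hnotK y1 x hx, hnotK y2 x hx]
        have := mul_nonneg hε (hub x).1
        linarith
    have hmono := qi_mono hρ htot (hfib0 y1) hptwise
    have hgem : ρ (fiberY f y2 + ε • uCc) = ρ (fiberY f y2) + ε * ρ uCc :=
      gem_add hρ (hfib0 y2) (fun x => ⟨(hub x).1, (hub x).2⟩)
        (fun x hx => hu1 (hfibK y2 hx)) ε
    have huρ : ρ uCc ≤ 1 := bounded_of_total_le_one htot fun x => ⟨(hub x).1, (hub x).2⟩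
    have huρ0 : 0 ≤ ρ uCc := hρ.pos _ fun x => (hub x).1
    nlinarith
  constructor
  · rw [continuous_iff_continuousAt]
    intro y₀
    apply Metric.tendsto_nhds.mpr
    intro ε hε
    set W := {p : X × Y | |f p - f (p.1, y₀)| < ε / 2} with hW
    have hWopen : IsOpen W := by
      have hcont : Continuous fun p : X × Y => |f p - f (p.1, y₀)| :=
        (f.continuous.sub (f.continuous.comp (continuous_fst.prodMk continuous_const))).abs
      exact isOpen_lt hcont continuous_const
    have hKW : K ×ˢ ({y₀} : Set Y) ⊆ W := by
      rintro ⟨x, y⟩ ⟨-, hy⟩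
      have hy' : y = y₀ := hy
      show |f (x, y) - f ((x, y).1, y₀)| < ε / 2
      rw [hy']
      simp only [sub_self, abs_zero]
      linarith
    obtain ⟨U', N, hU'o, hNo, hKU', hy₀N, hUNW⟩ :=
      generalized_tube_lemma hKcomp isCompact_singleton hWopen hKW
    have hN : N ∈ nhds y₀ := hNo.mem_nhds (hy₀N rfl)
    filter_upwards [hN] with y hy
    have hmemW : ∀ x ∈ K, (x, y) ∈ W := fun x hx => hUNW ⟨hKU' hx, hy⟩
    have habs : ∀ x ∈ K, |f (x, y) - f ((x, y).1, y₀)| < ε / 2 := fun x hx => hmemW x hx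
    have hb1 : ∀ x ∈ K, f (x, y) ≤ f (x, y₀) + ε / 2 := by
      intro x hx
      have h3 := abs_lt.mp (habs x hx)
      have h4 : f (x, y) - f (x, y₀) < ε / 2 := h3.2
      linarith
    have hb2 : ∀ x ∈ K, f (x, y₀) ≤ f (x, y) + ε / 2 := by
      intro x hx
      have h3 := abs_lt.mp (habs x hx)
      have h4 : -(ε / 2) < f (x, y) - f (x, y₀) := h3.1
      linarith
    have h1 := hcomp (ε / 2) (by linarith) y y₀ hb1
    have h2 := hcomp (ε / 2) (by linarith) y₀ y hb2
    show dist (Tmap ρ f y) (Tmap ρ f y₀) < ε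
    rw [Real.dist_eq]
    have e1 : Tmap ρ f y = ρ (fiberY f y) := rfl
    have e2 : Tmap ρ f y₀ = ρ (fiberY f y₀) := rfl
    rw [e1, e2]
    apply abs_lt.mpr
    constructor <;> linarith
  · apply HasCompactSupport.intro (f.hasCompactSupport'.image continuous_snd)
    intro y hy
    have hfz : fiberY f y = 0 := by
      ext x
      show f (x, y) = 0
      by_contra hxx
      exact hy ⟨(x, y), subset_tsupport _ hxx, rfl⟩
    show ρ (fiberY f y) = 0
    rw [hfz, hρ.map_zero]

end TCont


section Helpers

variable {τ : C_c(Z, ℝ) → ℝ}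

theorem exists_competitor_lt {U : Set Z} {r : ℝ} (hr : 0 ≤ r)
    (h : ENNReal.ofReal r < qiOpen τ U) : ∃ f : C_c(Z, ℝ), Cpt U f ∧ r < τ f := by
  rw [qiOpen_eq] at h
  obtain ⟨f, hf⟩ := lt_iSup_iff.mp h
  obtain ⟨hC, hlt⟩ := lt_iSup_iff.mp hf
  exact ⟨f, hC, (ENNReal.ofReal_lt_ofReal_iff_of_nonneg hr).mp hlt⟩

theorem isSimpleQI_of_vanishing (h : ∀ f : C_c(Z, ℝ), τ f = 0) : IsSimpleQI τ := by
  refine isSimpleQI_of_open fun U hU => Or.inl ?_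
  refine le_antisymm (qiOpen_le fun f _ => ?_) zero_le
  simp [h f]

/-- Urysohn's lemma packaged for `C_c`. -/
theorem urysohn_cc [T2Space Z] [LocallyCompactSpace Z] {K U : Set Z} (hK : IsCompact K) (hU : IsOpen U)
    (hKU : K ⊆ U) : ∃ φ : C_c(Z, ℝ),
      (∀ z, 0 ≤ φ z ∧ φ z ≤ 1) ∧ (∀ z ∈ K, φ z = 1) ∧ tsupport (⇑φ) ⊆ U := by
  obtain ⟨L, hL, hKL, hLU⟩ := exists_compact_between hK hU hKU
  obtain ⟨φ, hφ1, hφ0, hφHCS, hφIcc⟩ :=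
    exists_continuous_one_zero_of_isCompact hK isOpen_interior.isClosed_compl
      (Set.disjoint_left.mpr fun x hx hxc => hxc (hKL hx))
  refine ⟨⟨φ, hφHCS⟩, fun z => ⟨(hφIcc z).1, (hφIcc z).2⟩,
    fun z hz => by simpa using hφ1 hz, ?_⟩
  have hsupp : Function.support (⇑φ) ⊆ interior L := by
    intro x hx
    by_contra hxc
    exact hx (by simpa using hφ0 hxc)
  calc tsupport (⇑φ) ⊆ closure (interior L) := closure_mono hsupp
  _ ⊆ closure L := closure_mono interior_subset
  _ = L := hL.isClosed.closure_eq
  _ ⊆ U := hLU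

theorem qiOuter_compact_simple (hs : IsSimpleQI τ) {K : Set Z} (hK : IsCompact K)
    [T2Space Z] : qiOuter τ K = 0 ∨ qiOuter τ K = 1 := by
  by_cases hop : IsOpen K
  · rw [qiOuter_of_open hop]
    exact simple_on_opens hs hop
  · rw [← qiMeas_not_open hop]
    exact hs K (Or.inr hK.isClosed)

/-- Scaled quasi-integral. -/
theorem isQI_scale (hτ : IsQuasiIntegral τ) {c : ℝ} (hc : 0 ≤ c) :
    IsQuasiIntegral (fun f => c * τ f) := by
  constructor
  · intro a f
    rw [hτ.smul]
    ring
  · intro f g h hg hh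
    rw [hτ.add f g h hg hh]
    ring
  · intro f hf
    exact mul_nonneg hc (hτ.pos f hf)

theorem qiOpen_scale {c : ℝ} (hc : 0 ≤ c) (U : Set Z) :
    qiOpen (fun f => c * τ f) U = ENNReal.ofReal c * qiOpen τ U := by
  rw [qiOpen_eq, qiOpen_eq, ENNReal.mul_iSup]
  refine iSup_congr fun f => ?_
  rw [ENNReal.mul_iSup]
  exact iSup_congr fun _ => ENNReal.ofReal_mul hc

end Helpers


section Core

variable {X Y : Type*} [TopologicalSpace X] [T2Space X] [LocallyCompactSpace X]
  [TopologicalSpace Y] [T2Space Y] [LocallyCompactSpace Y]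
variable {ρ : C_c(X, ℝ) → ℝ} {η : C_c(Y, ℝ) → ℝ}

set_option maxHeartbeats 2000000 in
/-- The value of the product quasi-integral on a finite union of open rectangles is 0 or 1,
when both factors are simple with total value 1. -/
theorem rect_union_01 (hρ : IsQuasiIntegral ρ) (hη : IsQuasiIntegral η)
    (hsρ : IsSimpleQI ρ) (hsη : IsSimpleQI η)
    (ha : qiOpen ρ (univ : Set X) = 1) (hb : qiOpen η (univ : Set Y) = 1)
    {ι : Type*} (t : Finset ι) (U : ι → Set X) (V : ι → Set Y)
    (hUo : ∀ i ∈ t, IsOpen (U i)) (hVo : ∀ i ∈ t, IsOpen (V i)) :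
    qiOpen (prodQI η ρ) (⋃ i ∈ t, U i ×ˢ V i) = 0 ∨
      qiOpen (prodQI η ρ) (⋃ i ∈ t, U i ×ˢ V i) = 1 := by
  classical
  set R : Set (X × Y) := ⋃ i ∈ t, U i ×ˢ V i with hR
  set 𝒮 : Finset (Finset ι) :=
    t.powerset.filter (fun S => qiOpen ρ (⋃ i ∈ S, U i) = 1) with h𝒮
  have h𝒮sub : ∀ S ∈ 𝒮, S ⊆ t := fun S hS =>
    Finset.mem_powerset.mp (Finset.mem_filter.mp hS).1
  have h𝒮val : ∀ S ∈ 𝒮, qiOpen ρ (⋃ i ∈ S, U i) = 1 := fun S hS =>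
    (Finset.mem_filter.mp hS).2
  set G : Set Y := ⋃ S ∈ 𝒮, (⋂ i ∈ S, V i) with hG
  have hGopen : IsOpen G :=
    isOpen_biUnion fun S hS => isOpen_biInter_finset fun i hi => hVo i (h𝒮sub S hS hi)
  set νstar : ℝ≥0∞ := ⨆ (K : Set Y) (_ : IsCompact K ∧ K ⊆ G), qiOuter η K with hνstar
  have hν01 : ∀ K : Set Y, IsCompact K → qiOuter η K = 0 ∨ qiOuter η K = 1 :=
    fun K hK => qiOuter_compact_simple hsη hK
  have hνle : νstar ≤ 1 := iSup₂_le fun K hK => by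
    rcases hν01 K hK.1 with h | h <;> simp [h]
  have hνtop : νstar ≠ ∞ := ne_top_of_le_ne_top ENNReal.one_ne_top hνle
  -- UPPER BOUND: qiOpen (prodQI η ρ) R ≤ νstar
  have hupper : qiOpen (prodQI η ρ) R ≤ νstar := by
    refine qiOpen_le fun f hf => ?_
    by_cases hcond : Continuous (Tmap ρ f) ∧ HasCompactSupport (Tmap ρ f)
    · set g := TCc ρ f with hgdef
      have hgC : ∀ y, g y = ρ (fiberY f y) := fun y => congrFun (tcc_coe_of hcond) y
      have hfib01 : ∀ (y : Y) (x : X), 0 ≤ fiberY f y x ∧ fiberY f y x ≤ 1 :=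
        fun y x => hf.1 (x, y)
      have hg01 : ∀ y, 0 ≤ g y ∧ g y ≤ 1 := by
        intro y
        rw [hgC y]
        exact ⟨hρ.pos _ fun x => (hfib01 y x).1, bounded_of_total_le_one ha.le (hfib01 y)⟩
      have hKG : ∀ δ : ℝ, 0 < δ → ((⇑g) ⁻¹' Ici δ) ⊆ G := by
        intro δ hδ y hy
        have hyδ : δ ≤ g y := hy
        set Sy : Finset ι := t.filter (fun i => y ∈ V i) with hSy
        have hfibC : Cpt (⋃ i ∈ Sy, U i) (fiberY f y) := by
          refine ⟨hfib01 y, (fiberY_tsupport f y).trans ?_⟩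
          intro x hx
          have hxR := hf.2 hx
          rw [hR] at hxR
          obtain ⟨i, hit, hmem⟩ := Set.mem_iUnion₂.mp hxR
          exact Set.mem_biUnion (Finset.mem_filter.mpr ⟨hit, hmem.2⟩) hmem.1
        have hgy : 0 < ρ (fiberY f y) := by
          rw [← hgC y]; linarith
        have hpos : (0:ℝ≥0∞) < qiOpen ρ (⋃ i ∈ Sy, U i) :=
          lt_of_lt_of_le (ENNReal.ofReal_pos.mpr hgy) (le_qiOpen hfibC)
        have hSyopen : IsOpen (⋃ i ∈ Sy, U i) :=
          isOpen_biUnion fun i hi => hUo i (Finset.mem_filter.mp hi).1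
        have h1 : qiOpen ρ (⋃ i ∈ Sy, U i) = 1 := by
          rcases simple_on_opens hsρ hSyopen with h | h
          · rw [h] at hpos; exact absurd hpos (lt_irrefl 0)
          · exact h
        have hSymem : Sy ∈ 𝒮 := Finset.mem_filter.mpr
          ⟨Finset.mem_powerset.mpr (Finset.filter_subset _ _), h1⟩
        exact Set.mem_biUnion hSymem
          (Set.mem_iInter₂.mpr fun i hi => (Finset.mem_filter.mp hi).2)
      show ENNReal.ofReal (η (TCc ρ f)) ≤ νstar
      rw [← hgdef]
      have hηg : η g ≤ νstar.toReal := by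
        refine le_of_forall_pos_le_add fun δ hδ => ?_
        have ht1 := t1_upper hη hb.le hg01 hδ
        have hKcomp : IsCompact ((⇑g) ⁻¹' Ici δ) := by
          refine IsCompact.of_isClosed_subset g.hasCompactSupport'
            (isClosed_Ici.preimage g.continuous) ?_
          intro y hy
          have hyδ : δ ≤ g y := hy
          refine subset_tsupport _ ?_
          simp only [Function.mem_support]
          intro h0
          have h0' : g y = 0 := h0
          linarith
        have hKν : qiOuter η ((⇑g) ⁻¹' Ici δ) ≤ νstar :=
          le_iSup₂ (f := fun (K : Set Y) (_ : IsCompact K ∧ K ⊆ G) => qiOuter η K)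
            ((⇑g) ⁻¹' Ici δ) ⟨hKcomp, hKG δ hδ⟩
        have h2 : (qiOuter η ((⇑g) ⁻¹' Ici δ)).toReal ≤ νstar.toReal :=
          ENNReal.toReal_mono hνtop hKν
        linarith
      calc ENNReal.ofReal (η g) ≤ ENNReal.ofReal (νstar.toReal) :=
          ENNReal.ofReal_le_ofReal hηg
      _ = νstar := ENNReal.ofReal_toReal hνtop
    · show ENNReal.ofReal (η (TCc ρ f)) ≤ νstar
      rw [tcc_of_not hcond, hη.map_zero]
      simp
  by_cases hν0 : νstar = 0
  · exact Or.inl (le_antisymm (hupper.trans hν0.le) zero_le)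
  -- LOWER BOUND
  right
  have hex : ∃ K : Set Y, (IsCompact K ∧ K ⊆ G) ∧ qiOuter η K = 1 := by
    by_contra hno
    push_neg at hno
    apply hν0
    refine le_antisymm (iSup₂_le fun K hK => ?_) zero_le
    rcases hν01 K hK.1 with h | h
    · exact h.le
    · exact absurd h (hno K hK)
  obtain ⟨C, ⟨hCcomp, hCG⟩, hC1⟩ := hex
  have hν1 : νstar = 1 := le_antisymm hνle
    (hC1 ▸ le_iSup₂ (f := fun (K : Set Y) (_ : IsCompact K ∧ K ⊆ G) => qiOuter η K)
      C ⟨hCcomp, hCG⟩)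
  have hsuff : ∀ ε : ℝ, 0 < ε → ε < 1/2 →
      ENNReal.ofReal ((1 - ε) * (1 - ε)) ≤ qiOpen (prodQI η ρ) R := by
    intro ε hε hε2
    have hε1 : (0:ℝ) < 1 - ε := by linarith
    -- shrink the cover of C
    obtain ⟨CS, hCScomp, hCSsub, hCSeq⟩ := hCcomp.finite_compact_cover 𝒮
      (fun S => ⋂ i ∈ S, V i)
      (fun S hS => isOpen_biInter_finset fun i hi => hVo i (h𝒮sub S hS hi)) hCG
    -- good competitors on the X side
    have hwex : ∀ S ∈ 𝒮, ∃ w : C_c(X, ℝ), Cpt (⋃ i ∈ S, U i) w ∧ 1 - ε < ρ w := by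
      intro S hS
      refine exists_competitor_lt (by linarith) ?_
      rw [h𝒮val S hS]
      exact ENNReal.ofReal_lt_one.mpr (by linarith)
    choose! w hwC hwρ using hwex
    -- Urysohn functions
    have hαex : ∀ S ∈ 𝒮, ∃ α : C_c(X, ℝ), (∀ z, 0 ≤ α z ∧ α z ≤ 1) ∧
        (∀ z ∈ tsupport (⇑(w S)), α z = 1) ∧ tsupport (⇑α) ⊆ (⋃ i ∈ S, U i) := by
      intro S hS
      exact urysohn_cc (w S).hasCompactSupport'
        (isOpen_biUnion fun i hi => hUo i (h𝒮sub S hS hi)) (hwC S hS).2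
    choose! α hα01 hα1 hαsupp using hαex
    have hθex : ∀ S ∈ 𝒮, ∃ θ : C_c(Y, ℝ), (∀ z, 0 ≤ θ z ∧ θ z ≤ 1) ∧
        (∀ z ∈ CS S, θ z = 1) ∧ tsupport (⇑θ) ⊆ (⋂ i ∈ S, V i) := by
      intro S hS
      exact urysohn_cc (hCScomp S)
        (isOpen_biInter_finset fun i hi => hVo i (h𝒮sub S hS hi)) (hCSsub S)
    choose! θ hθ01 hθ1 hθsupp using hθex
    -- the big competitor f₀
    set F : X × Y → ℝ := fun p => min (∑ S ∈ 𝒮, min (α S p.1) (θ S p.2)) 1 with hF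
    have hFcont : Continuous F := by
      refine Continuous.min ?_ continuous_const
      refine continuous_finset_sum _ fun S _ => ?_
      exact Continuous.min ((α S).continuous.comp continuous_fst)
        ((θ S).continuous.comp continuous_snd)
    set K₀ : Set (X × Y) := ⋃ S ∈ 𝒮, (tsupport (⇑(α S)) ×ˢ tsupport (⇑(θ S))) with hK₀
    have hK₀comp : IsCompact K₀ := 𝒮.finite_toSet.isCompact_biUnion fun S _ =>
      ((α S).hasCompactSupport').prod ((θ S).hasCompactSupport')
    have hFvanish : ∀ p ∉ K₀, F p = 0 := by
      intro p hp
      have hterm : ∀ S ∈ 𝒮, min (α S p.1) (θ S p.2) = 0 := by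
        intro S hS
        by_contra hne
        have h1 : 0 < min (α S p.1) (θ S p.2) :=
          lt_of_le_of_ne (le_min (hα01 S hS p.1).1 (hθ01 S hS p.2).1) (Ne.symm hne)
        have h2 : p.1 ∈ tsupport (⇑(α S)) := subset_tsupport _ (by
          simp only [Function.mem_support]
          intro h0
          rw [h0] at h1
          simp only [lt_min_iff] at h1
          exact absurd h1.1 (lt_irrefl 0))
        have h3 : p.2 ∈ tsupport (⇑(θ S)) := subset_tsupport _ (by
          simp only [Function.mem_support]
          intro h0
          rw [h0] at h1
          simp only [lt_min_iff] at h1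
          exact absurd h1.2 (lt_irrefl 0))
        exact hp (Set.mem_biUnion hS ⟨h2, h3⟩)
      have hsum : (∑ S ∈ 𝒮, min (α S p.1) (θ S p.2)) = 0 := Finset.sum_eq_zero hterm
      rw [hF]
      simp only [hsum]
      exact min_eq_left zero_le_one
    set f₀ : C_c(X × Y, ℝ) := ⟨⟨F, hFcont⟩, HasCompactSupport.intro hK₀comp hFvanish⟩
      with hf₀
    have hf₀app : ∀ p, f₀ p = F p := fun p => rfl
    have hf₀01 : ∀ p, 0 ≤ f₀ p ∧ f₀ p ≤ 1 := by
      intro p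
      rw [hf₀app]
      constructor
      · refine le_min (Finset.sum_nonneg fun S hS => ?_) zero_le_one
        exact le_min (hα01 S hS p.1).1 (hθ01 S hS p.2).1
      · exact min_le_right _ _
    have hf₀supp : tsupport (⇑f₀) ⊆ R := by
      have h1 : tsupport (⇑f₀) ⊆ K₀ := by
        apply closure_minimal _ (Set.Finite.isClosed_biUnion 𝒮.finite_toSet
          fun S _ => (isClosed_tsupport _).prod (isClosed_tsupport _))
        intro p hp
        by_contra hpc
        exact hp (hFvanish p hpc)
      refine h1.trans ?_
      refine Set.iUnion₂_subset fun S hS => ?_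
      rintro ⟨x, y⟩ ⟨hx, hy⟩
      have hxU := hαsupp S hS hx
      obtain ⟨i, hiS, hxUi⟩ := Set.mem_iUnion₂.mp hxU
      have hyV : y ∈ V i := Set.mem_iInter₂.mp (hθsupp S hS hy) i hiS
      exact Set.mem_biUnion (h𝒮sub S hS hiS) ⟨hxUi, hyV⟩
    -- slice estimate on C
    have hslice : ∀ y ∈ C, 1 - ε < ρ (fiberY f₀ y) := by
      intro y hy
      rw [hCSeq] at hy
      obtain ⟨S, hS𝒮, hyCS⟩ := Set.mem_iUnion₂.mp hy
      have hθSy : θ S y = 1 := hθ1 S hS𝒮 y hyCS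
      have hwle : ∀ x, w S x ≤ fiberY f₀ y x := by
        intro x
        have hwα : w S x ≤ α S x := by
          by_cases hx : x ∈ tsupport (⇑(w S))
          · rw [hα1 S hS𝒮 x hx]
            exact ((hwC S hS𝒮).1 x).2
          · rw [image_eq_zero_of_notMem_tsupport hx]
            exact (hα01 S hS𝒮 x).1
        have h2 : fiberY f₀ y x = min (∑ S' ∈ 𝒮, min (α S' x) (θ S' y)) 1 := rfl
        rw [h2]
        refine le_min ?_ ((hwC S hS𝒮).1 x).2
        calc w S x ≤ min (α S x) (θ S y) := by
              rw [hθSy]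
              exact le_min hwα ((hwC S hS𝒮).1 x).2
        _ ≤ ∑ S' ∈ 𝒮, min (α S' x) (θ S' y) := Finset.single_le_sum
              (f := fun S' => min (α S' x) (θ S' y))
              (fun S' hS' => le_min (hα01 S' hS' x).1 (hθ01 S' hS' y).1) hS𝒮
      have hmono := qi_mono hρ ha.le (fun x => ((hwC S hS𝒮).1 x).1) hwle
      linarith [hwρ S hS𝒮]
    -- T f₀ is continuous with compact support
    have hcond := tmap_cc hρ ha.le f₀ (fun p => (hf₀01 p).1)
    set g := TCc ρ f₀ with hgdef
    have hgC : ∀ y, g y = ρ (fiberY f₀ y) := fun y => congrFun (tcc_coe_of hcond) y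
    have hg01 : ∀ y, 0 ≤ g y ∧ g y ≤ 1 := by
      intro y
      rw [hgC y]
      exact ⟨hρ.pos _ fun x => (hf₀01 (x, y)).1,
        bounded_of_total_le_one ha.le (fun x => hf₀01 (x, y))⟩
    -- the open set where g is large
    set O' : Set Y := (⇑g) ⁻¹' (Ioi (1 - ε)) with hO'
    have hO'open : IsOpen O' := isOpen_Ioi.preimage g.continuous
    have hCO' : C ⊆ O' := by
      intro y hy
      have := hslice y hy
      simp only [hO', Set.mem_preimage, Set.mem_Ioi]
      rw [hgC y]
      exact this
    have hηO' : (1:ℝ≥0∞) ≤ qiOpen η O' := hC1 ▸ qiOuter_le hO'open hCO'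
    obtain ⟨cc, hccC, hccη⟩ : ∃ cc : C_c(Y, ℝ), Cpt O' cc ∧ 1 - ε < η cc := by
      refine exists_competitor_lt (by linarith) (lt_of_lt_of_le ?_ hηO')
      exact ENNReal.ofReal_lt_one.mpr (by linarith)
    -- comparison function bb ∈ B(g)
    set φb : C(ℝ, ℝ) := ⟨fun s => min ((1 - ε)⁻¹ * s) 1, by continuity⟩ with hφb
    have hφb0 : φb 0 = 0 := by
      simp only [hφb, ContinuousMap.coe_mk, mul_zero]
      exact min_eq_left zero_le_one
    set bb := compCc φb hφb0 g with hbb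
    have hbbapp : ∀ y, bb y = min ((1 - ε)⁻¹ * g y) 1 := fun y => rfl
    have hbb01 : ∀ y, 0 ≤ bb y ∧ bb y ≤ 1 := by
      intro y
      rw [hbbapp]
      exact ⟨le_min (mul_nonneg (by positivity) (hg01 y).1) zero_le_one, min_le_right _ _⟩
    have hbbO' : ∀ y ∈ O', bb y = 1 := by
      intro y hy
      have hgy : 1 - ε < g y := hy
      rw [hbbapp]
      refine min_eq_right ?_
      rw [← div_eq_inv_mul, le_div_iff₀ hε1, one_mul]
      linarith
    have hccbb : ∀ y, cc y ≤ bb y := by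
      intro y
      by_cases hy : y ∈ tsupport (⇑cc)
      · rw [hbbO' y (hccC.2 hy)]
        exact (hccC.1 y).2
      · rw [image_eq_zero_of_notMem_tsupport hy]
        exact (hbb01 y).1
    have hηbb : 1 - ε < η bb :=
      lt_of_lt_of_le hccη (qi_mono hη hb.le (fun y => (hccC.1 y).1) hccbb)
    -- η g ≥ (1-ε) * η bb
    have hbbg : ∀ y, ((1 - ε) • bb) y ≤ g y := by
      intro y
      show (1 - ε) * bb y ≤ g y
      rw [hbbapp]
      rcases le_total ((1 - ε)⁻¹ * g y) 1 with hc | hc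
      · rw [min_eq_left hc]
        rw [show (1-ε) * ((1-ε)⁻¹ * g y) = g y by field_simp]
      · rw [min_eq_right hc]
        rw [mul_one]
        rw [← div_eq_inv_mul, le_div_iff₀ hε1, one_mul] at hc
        linarith
    have hηg : (1 - ε) * (1 - ε) < η g := by
      have h1 : η ((1 - ε) • bb) = (1 - ε) * η bb := hη.smul _ _
      have h2 := qi_mono hη hb.le
        (fun y => mul_nonneg hε1.le (hbb01 y).1) hbbg
      have h3 : (1 - ε) * (1 - ε) < (1 - ε) * η bb :=
        mul_lt_mul_of_pos_left hηbb hε1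
      linarith
    -- conclude
    have hfinal : ENNReal.ofReal ((1 - ε) * (1 - ε)) ≤ ENNReal.ofReal (prodQI η ρ f₀) := by
      apply ENNReal.ofReal_le_ofReal
      show (1 - ε) * (1 - ε) ≤ η (TCc ρ f₀)
      rw [← hgdef]
      linarith
    exact hfinal.trans (le_qiOpen ⟨hf₀01, hf₀supp⟩)
  -- pass to the limit ε → 0
  have hfin : qiOpen (prodQI η ρ) R ≤ 1 := hupper.trans hνle
  have hfintop : qiOpen (prodQI η ρ) R ≠ ∞ := ne_top_of_le_ne_top ENNReal.one_ne_top hfin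
  set r := (qiOpen (prodQI η ρ) R).toReal with hr
  have hrval : ∀ ε : ℝ, 0 < ε → ε < 1/2 → (1 - ε) * (1 - ε) ≤ r := by
    intro ε hε hε2
    have := hsuff ε hε hε2
    rwa [ENNReal.ofReal_le_iff_le_toReal hfintop] at this
  have hr0 : 0 ≤ r := ENNReal.toReal_nonneg
  have hr1 : 1 ≤ r := by
    by_contra hcon
    push_neg at hcon
    set ε := (1 - r) / 4 with hεdef
    have hε : 0 < ε := by rw [hεdef]; linarith
    have hε2 : ε < 1/2 := by rw [hεdef]; linarith
    have := hrval ε hε hε2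
    rw [hεdef] at this
    nlinarith
  refine le_antisymm hfin ?_
  calc (1:ℝ≥0∞) = ENNReal.ofReal 1 := by simp
  _ ≤ ENNReal.ofReal r := ENNReal.ofReal_le_ofReal hr1
  _ = qiOpen (prodQI η ρ) R := by rw [hr, ENNReal.ofReal_toReal hfintop]

end Core


section Assemble

variable {X Y : Type*} [TopologicalSpace X] [T2Space X] [LocallyCompactSpace X]
  [TopologicalSpace Y] [T2Space Y] [LocallyCompactSpace Y]
variable {ρ : C_c(X, ℝ) → ℝ} {η : C_c(Y, ℝ) → ℝ}

theorem prodQI_vanish_left (hρ : IsQuasiIntegral ρ) (hη : IsQuasiIntegral η)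
    (ha : qiOpen ρ (univ : Set X) = 0) (f : C_c(X × Y, ℝ)) : prodQI η ρ f = 0 := by
  have hρ0 : ∀ g, ρ g = 0 := zero_of_total_zero hρ ha
  have hTz : Tmap ρ f = fun _ => (0:ℝ) := funext fun y => hρ0 _
  have hcond : Continuous (Tmap ρ f) ∧ HasCompactSupport (Tmap ρ f) := by
    rw [hTz]
    exact ⟨continuous_const, HasCompactSupport.intro isCompact_empty (fun x _ => rfl)⟩
  have hT0 : TCc ρ f = 0 := by
    ext y
    rw [show TCc ρ f y = Tmap ρ f y from congrFun (tcc_coe_of hcond) y, hTz]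
    rfl
  show η (TCc ρ f) = 0
  rw [hT0, hη.map_zero]

theorem prodQI_vanish_right (hη : IsQuasiIntegral η)
    (hb : qiOpen η (univ : Set Y) = 0) (f : C_c(X × Y, ℝ)) : prodQI η ρ f = 0 :=
  zero_of_total_zero hη hb _

/-- The product of two simple quasi-integrals is simple. -/
theorem prodQI_simple (hρ : IsQuasiIntegral ρ) (hη : IsQuasiIntegral η)
    (hsρ : IsSimpleQI ρ) (hsη : IsSimpleQI η) : IsSimpleQI (prodQI η ρ) := by
  rcases simple_on_opens hsρ isOpen_univ with ha | ha
  · exact isSimpleQI_of_vanishing (prodQI_vanish_left hρ hη ha)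
  rcases simple_on_opens hsη isOpen_univ with hbz | hb
  · exact isSimpleQI_of_vanishing (prodQI_vanish_right hη hbz)
  refine isSimpleQI_of_open fun W hW => ?_
  have hle1 : qiOpen (prodQI η ρ) W ≤ 1 := by
    refine qiOpen_le fun f hf => ?_
    by_cases hcond : Continuous (Tmap ρ f) ∧ HasCompactSupport (Tmap ρ f)
    · set g := TCc ρ f with hgdef
      have hgC : ∀ y, g y = ρ (fiberY f y) := fun y => congrFun (tcc_coe_of hcond) y
      have hg01 : ∀ y, 0 ≤ g y ∧ g y ≤ 1 := by
        intro y
        rw [hgC y]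
        exact ⟨hρ.pos _ fun x => (hf.1 (x, y)).1,
          bounded_of_total_le_one ha.le (fun x => hf.1 (x, y))⟩
      show ENNReal.ofReal (η (TCc ρ f)) ≤ 1
      rw [← hgdef]
      exact hb ▸ le_qiOpen ⟨hg01, subset_univ _⟩
    · show ENNReal.ofReal (η (TCc ρ f)) ≤ 1
      rw [tcc_of_not hcond, hη.map_zero]
      simp
  by_cases hW0 : qiOpen (prodQI η ρ) W = 0
  · exact Or.inl hW0
  right
  obtain ⟨f, hfC, hfpos⟩ : ∃ f : C_c(X × Y, ℝ), Cpt W f ∧ 0 < prodQI η ρ f := by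
    refine exists_competitor_lt le_rfl ?_
    rw [ENNReal.ofReal_zero]
    exact zero_le.lt_of_ne (Ne.symm hW0)
  classical
  choose! Uc Vc hUco hVco hmemU hmemV hsubc using
    fun (p : X × Y) (hp : p ∈ tsupport f) => isOpen_prod_iff.mp hW p.1 p.2 (hfC.2 hp)
  have hcover : tsupport (⇑f) ⊆ ⋃ q : ↥(tsupport (⇑f)), (Uc ↑q ×ˢ Vc ↑q) := by
    intro p hp
    exact Set.mem_iUnion.mpr ⟨⟨p, hp⟩, Set.mem_prod.mpr ⟨hmemU p hp, hmemV p hp⟩⟩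
  obtain ⟨s, hs⟩ := f.hasCompactSupport'.elim_finite_subcover
    (fun q : ↥(tsupport (⇑f)) => Uc ↑q ×ˢ Vc ↑q)
    (fun q => (hUco q q.2).prod (hVco q q.2)) hcover
  have h01 := rect_union_01 hρ hη hsρ hsη ha hb s (fun q => Uc ↑q) (fun q => Vc ↑q)
    (fun q _ => hUco q q.2) (fun q _ => hVco q q.2)
  have hsubW : (⋃ q ∈ s, Uc ↑q ×ˢ Vc ↑q) ⊆ W :=
    Set.iUnion₂_subset fun q _ => hsubc q q.2
  have hRpos : (0:ℝ≥0∞) < qiOpen (prodQI η ρ) (⋃ q ∈ s, Uc ↑q ×ˢ Vc ↑q) :=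
    lt_of_lt_of_le (ENNReal.ofReal_pos.mpr hfpos) (le_qiOpen ⟨hfC.1, hs⟩)
  rcases h01 with h | h
  · rw [h] at hRpos
    exact absurd hRpos (lt_irrefl 0)
  · exact le_antisymm hle1 (h ▸ qiOpen_mono hsubW)

end Assemble


section Forward

variable {X Y : Type*} [TopologicalSpace X] [T2Space X] [LocallyCompactSpace X]
  [TopologicalSpace Y] [T2Space Y] [LocallyCompactSpace Y]
variable {ρ : C_c(X, ℝ) → ℝ} {η : C_c(Y, ℝ) → ℝ}

/-- Rescaling the two factors inversely does not change the product quasi-integral. -/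
theorem prodQI_rescale (hρ : IsQuasiIntegral ρ) (hη : IsQuasiIntegral η)
    {c : ℝ} (hc : 0 < c) (f : C_c(X × Y, ℝ)) :
    prodQI (fun g => c * η g) (fun g => c⁻¹ * ρ g) f = prodQI η ρ f := by
  set ρ' : C_c(X, ℝ) → ℝ := fun g => c⁻¹ * ρ g with hρ'def
  set η' : C_c(Y, ℝ) → ℝ := fun g => c * η g with hη'def
  have hTmap : Tmap ρ' f = (fun t => c⁻¹ * t) ∘ Tmap ρ f := rfl
  by_cases hcond : Continuous (Tmap ρ f) ∧ HasCompactSupport (Tmap ρ f)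
  · have hcond' : Continuous (Tmap ρ' f) ∧ HasCompactSupport (Tmap ρ' f) := by
      rw [hTmap]
      exact ⟨(continuous_const.mul continuous_id).comp hcond.1,
        hcond.2.comp_left (mul_zero c⁻¹)⟩
    have hTCc' : TCc ρ' f = c⁻¹ • TCc ρ f := by
      ext y
      rw [show TCc ρ' f y = Tmap ρ' f y from congrFun (tcc_coe_of hcond') y]
      show c⁻¹ * Tmap ρ f y = c⁻¹ * (TCc ρ f) y
      rw [show (TCc ρ f) y = Tmap ρ f y from congrFun (tcc_coe_of hcond) y]
    show η' (TCc ρ' f) = η (TCc ρ f)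
    rw [hTCc', hη'def]
    show c * η (c⁻¹ • TCc ρ f) = η (TCc ρ f)
    rw [hη.smul]
    field_simp
  · have hcond' : ¬ (Continuous (Tmap ρ' f) ∧ HasCompactSupport (Tmap ρ' f)) := by
      intro hc'
      apply hcond
      have hback : Tmap ρ f = (fun t => c * t) ∘ Tmap ρ' f := by
        funext y
        show Tmap ρ f y = c * (c⁻¹ * Tmap ρ f y)
        field_simp
      rw [hback]
      exact ⟨(continuous_const.mul continuous_id).comp hc'.1,
        hc'.2.comp_left (mul_zero c)⟩
    show η' (TCc ρ' f) = η (TCc ρ f)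
    rw [tcc_of_not hcond', tcc_of_not hcond, hη'def]
    show c * η 0 = η 0
    rw [hη.map_zero, mul_zero]

/-- The forward direction: a simple product factors through simple quasi-integrals. -/
theorem forward_factor (hρ : IsQuasiIntegral ρ) (hη : IsQuasiIntegral η)
    (hS : IsSimpleQI (prodQI η ρ)) :
    ∃ (ρ' : C_c(X, ℝ) → ℝ) (η' : C_c(Y, ℝ) → ℝ),
      IsQuasiIntegral ρ' ∧ IsQuasiIntegral η' ∧ IsSimpleQI ρ' ∧ IsSimpleQI η' ∧
      ∀ f : C_c(X × Y, ℝ), prodQI η ρ f = prodQI η' ρ' f := by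
  have hZQI : IsQuasiIntegral (fun _ : C_c(X, ℝ) => (0:ℝ)) :=
    ⟨fun a f => by ring, fun _ _ _ _ _ => by ring, fun _ _ => le_refl 0⟩
  have hZQI' : IsQuasiIntegral (fun _ : C_c(Y, ℝ) => (0:ℝ)) :=
    ⟨fun a f => by ring, fun _ _ _ _ _ => by ring, fun _ _ => le_refl 0⟩
  have huniv : qiOpen (prodQI η ρ) (univ : Set (X × Y))
      = qiOpen ρ univ * qiOpen η univ := by
    rw [← Set.univ_prod_univ]
    exact prod_eq hρ hη univ univ
  have h01 := simple_on_opens hS isOpen_univ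
  rw [huniv] at h01
  rcases h01 with hz | hab
  · -- total value zero: the product vanishes identically
    have hvanish : ∀ f : C_c(X × Y, ℝ), prodQI η ρ f = 0 := by
      rcases mul_eq_zero.mp hz with ha | hb
      · exact prodQI_vanish_left hρ hη ha
      · exact prodQI_vanish_right hη hb
    refine ⟨fun _ => 0, fun _ => 0, hZQI, hZQI', isSimpleQI_of_vanishing fun _ => rfl,
      isSimpleQI_of_vanishing fun _ => rfl, fun f => ?_⟩
    rw [hvanish f]
    rfl
  -- total value one: rescale
  set a := qiOpen ρ (univ : Set X) with hadef
  set b := qiOpen η (univ : Set Y) with hbdef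
  have ha0 : a ≠ 0 := by
    intro h
    rw [h, zero_mul] at hab
    exact zero_ne_one hab
  have hb0 : b ≠ 0 := by
    intro h
    rw [h, mul_zero] at hab
    exact zero_ne_one hab
  have hatop : a ≠ ∞ := by
    intro h
    rw [h, ENNReal.top_mul hb0] at hab
    exact (ENNReal.top_ne_one) hab
  have hbtop : b ≠ ∞ := by
    intro h
    rw [h, ENNReal.mul_top ha0] at hab
    exact (ENNReal.top_ne_one) hab
  set c := a.toReal with hcdef
  have hc : 0 < c := ENNReal.toReal_pos ha0 hatop
  have hca : ENNReal.ofReal c = a := ENNReal.ofReal_toReal hatop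
  have hcancel : ∀ x : ℝ≥0∞, x * b = 1 → x = b⁻¹ := by
    intro x hx
    rw [← mul_one x, ← ENNReal.mul_inv_cancel hb0 hbtop, ← mul_assoc, hx, one_mul]
  have hcancel' : ∀ x : ℝ≥0∞, a * x = 1 → x = a⁻¹ := by
    intro x hx
    rw [← one_mul x, ← ENNReal.inv_mul_cancel ha0 hatop, mul_assoc, hx, mul_one]
  have hcinv : ENNReal.ofReal c⁻¹ * a = 1 := by
    rw [← hca, ← ENNReal.ofReal_mul (by positivity), inv_mul_cancel₀ hc.ne',
      ENNReal.ofReal_one]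
  refine ⟨fun g => c⁻¹ * ρ g, fun g => c * η g,
    isQI_scale hρ (by positivity), isQI_scale hη hc.le, ?_, ?_,
    fun f => (prodQI_rescale hρ hη hc f).symm⟩
  · -- simplicity of the rescaled ρ
    refine isSimpleQI_of_open fun U hU => ?_
    have hrect := prod_eq hρ hη U (univ : Set Y)
    have h01U := simple_on_opens hS (hU.prod isOpen_univ)
    rw [hrect] at h01U
    rw [qiOpen_scale (by positivity : (0:ℝ) ≤ c⁻¹) U]
    rcases h01U with h | h
    · left
      rcases mul_eq_zero.mp h with h' | h'
      · rw [h', mul_zero]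
      · exact absurd h' hb0
    · right
      have h1 : qiOpen ρ U = b⁻¹ := hcancel _ h
      have h2 : a = b⁻¹ := hcancel a hab
      rw [h1, ← h2, hcinv]
  · -- simplicity of the rescaled η
    refine isSimpleQI_of_open fun V hV => ?_
    have hrect := prod_eq hρ hη (univ : Set X) V
    have h01V := simple_on_opens hS (isOpen_univ.prod hV)
    rw [hrect] at h01V
    rw [qiOpen_scale hc.le V]
    rcases h01V with h | h
    · left
      rcases mul_eq_zero.mp h with h' | h'
      · exact absurd h' ha0
      · rw [h', mul_zero]
    · right
      have h1 : qiOpen η V = a⁻¹ := hcancel' _ h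
      have h2 : b = a⁻¹ := hcancel' b hab
      rw [h1, ← h2, hca, hab]

end Forward

end QLF

namespace QLF
theorem statement12 {X Y : Type*}
    [TopologicalSpace X] [LocallyCompactSpace X] [T2Space X] [ConnectedSpace X]
    [TopologicalSpace Y] [LocallyCompactSpace Y] [T2Space Y] [ConnectedSpace Y]
    (ρ : C_c(X, ℝ) → ℝ) (η : C_c(Y, ℝ) → ℝ)
    (hρ : IsQuasiIntegral ρ) (hη : IsQuasiIntegral η)
    (hqi : IsQuasiIntegral (prodQI η ρ)) :
    IsSimpleQI (prodQI η ρ) ↔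
      ∃ (ρ' : C_c(X, ℝ) → ℝ) (η' : C_c(Y, ℝ) → ℝ),
        IsQuasiIntegral ρ' ∧ IsQuasiIntegral η' ∧ IsSimpleQI ρ' ∧ IsSimpleQI η' ∧
        ∀ f : C_c(X × Y, ℝ), prodQI η ρ f = prodQI η' ρ' f := by
  constructor
  · exact forward_factor hρ hη
  · rintro ⟨ρ', η', hρ', hη', hsρ', hsη', hEqv⟩
    have hfun : prodQI η ρ = prodQI η' ρ' := funext hEqv
    rw [hfun]
    exact prodQI_simple hρ' hη' hsρ' hsη'
end QLF
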